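/- For every prime p ≥ 2 and every integer n ≥ 1, -∑_{k=1}^n μ(p·k) ⌊n/k⌋ = 1 + ⌊log n / log p⌋, i.e., this sum counts the powers p^0, p^1, …, p^m ≤ n. -/

import Mathlib

open ArithmeticFunction Finset in
theorem swapLem (f : ℕ → ℤ) (n : ℕ) :
    ∑ k ∈ Finset.Icc 1 n, f k * (n / k : ℕ) =
      ∑ m ∈ Finset.Icc 1 n, ∑ d ∈ m.divisors, f d := by
  have h1 : ∀ m ∈ Finset.Icc 1 n, m.divisors = (Finset.Icc 1 n).filter (· ∣ m) := by
    intro m hm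
    simp only [Finset.mem_Icc] at hm
    ext d
    simp only [Nat.mem_divisors, Finset.mem_filter, Finset.mem_Icc]
    constructor
    · rintro ⟨hd, hm0⟩
      exact ⟨⟨Nat.one_le_iff_ne_zero.mpr (fun h => by simp [h] at hd; omega),
        le_trans (Nat.le_of_dvd (by omega) hd) hm.2⟩, hd⟩
    · rintro ⟨_, hd⟩; exact ⟨hd, by omega⟩
  symm
  calc ∑ m ∈ Finset.Icc 1 n, ∑ d ∈ m.divisors, f d
      = ∑ m ∈ Finset.Icc 1 n, ∑ d ∈ (Finset.Icc 1 n).filter (· ∣ m), f d :=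
        Finset.sum_congr rfl fun m hm => by rw [h1 m hm]
    _ = ∑ d ∈ Finset.Icc 1 n, ∑ m ∈ (Finset.Icc 1 n).filter (d ∣ ·), f d := by
        apply Finset.sum_comm'
        intro x y
        simp only [Finset.mem_filter]
        tauto
    _ = ∑ k ∈ Finset.Icc 1 n, f k * (n / k : ℕ) := by
        apply Finset.sum_congr rfl
        intro d hd
        have hi : Finset.Icc 1 n = Finset.Ioc 0 n := by ext x; simp; omega
        rw [Finset.sum_const, hi, Nat.Ioc_filter_dvd_card_eq_div, nsmul_eq_mul, mul_comm]

open ArithmeticFunction ArithmeticFunction.Moebius ArithmeticFunction.zeta Finset in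
theorem innerLem (p : ℕ) (hp : p.Prime) (m : ℕ) (hm : m ≠ 0) :
    ∑ d ∈ m.divisors, (μ (p * d) : ℤ) =
      -(if ordCompl[p] m = 1 then 1 else 0) := by
  have hmu : ∀ d, (μ (p * d) : ℤ) = if p ∣ d then 0 else -μ d := by
    intro d
    by_cases hpd : p ∣ d
    · simp only [hpd, if_true]
      apply moebius_eq_zero_of_not_squarefree
      intro h
      exact hp.one_lt.ne' (Nat.isUnit_iff.mp (h p (mul_dvd_mul_left p hpd)))
    · simp only [hpd, if_false]
      rw [isMultiplicative_moebius.map_mul_of_coprime (hp.coprime_iff_not_dvd.mpr hpd),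
        moebius_apply_prime hp]
      ring
  rw [Finset.sum_congr rfl fun d _ => hmu d, Finset.sum_ite, Finset.sum_const_zero, zero_add]
  rw [Finset.sum_neg_distrib]
  congr 1
  have hfilt : m.divisors.filter (fun d => ¬ p ∣ d) = (ordCompl[p] m).divisors := by
    ext d
    simp only [Finset.mem_filter, Nat.mem_divisors]
    constructor
    · rintro ⟨⟨hd, _⟩, hpd⟩
      refine ⟨?_, (Nat.ordCompl_pos p hm).ne'⟩
      have hcop : d.Coprime (p ^ m.factorization p) :=
        Nat.Coprime.pow_right _ (hp.coprime_iff_not_dvd.mpr hpd).symm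
      exact hcop.dvd_of_dvd_mul_left (by rwa [Nat.ordProj_mul_ordCompl_eq_self m p])
    · rintro ⟨hd, _⟩
      refine ⟨⟨hd.trans (Nat.ordCompl_dvd m p), hm⟩, fun hpd => ?_⟩
      exact Nat.not_dvd_ordCompl hp hm (hpd.trans hd)
  rw [hfilt]
  have h2 : (μ * ζ : ArithmeticFunction ℤ) (ordCompl[p] m)
      = ∑ d ∈ (ordCompl[p] m).divisors, μ d := coe_mul_zeta_apply
  rw [moebius_mul_coe_zeta] at h2
  rw [← h2, one_apply]

theorem countLem (p : ℕ) (hp : p.Prime) (n : ℕ) (hn : 1 ≤ n) :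
    ∑ m ∈ Finset.Icc 1 n, (if ordCompl[p] m = 1 then (1:ℤ) else 0) =
      (Nat.log p n : ℤ) + 1 := by
  have hn0 : n ≠ 0 := by omega
  have hset : (Finset.Icc 1 n).filter (fun m => ordCompl[p] m = 1)
      = (Finset.range (Nat.log p n + 1)).image (p ^ ·) := by
    ext x
    simp only [Finset.mem_filter, Finset.mem_Icc, Finset.mem_image, Finset.mem_range,
      Nat.lt_succ_iff]
    constructor
    · rintro ⟨⟨hx1, hxn⟩, hoc⟩
      refine ⟨x.factorization p, ?_, ?_⟩
      · apply (Nat.le_log_iff_pow_le hp.one_lt hn0).mpr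
        calc p ^ x.factorization p = p ^ x.factorization p * ordCompl[p] x := by
              rw [hoc, mul_one]
          _ = x := Nat.ordProj_mul_ordCompl_eq_self x p
          _ ≤ n := hxn
      · calc p ^ x.factorization p = p ^ x.factorization p * ordCompl[p] x := by
              rw [hoc, mul_one]
          _ = x := Nat.ordProj_mul_ordCompl_eq_self x p
    · rintro ⟨j, hj, rfl⟩
      have hpos : 0 < p ^ j := pow_pos hp.pos j
      refine ⟨⟨hpos, ?_⟩, ?_⟩
      · exact le_trans (Nat.pow_le_pow_right hp.pos hj) (Nat.pow_log_le_self p hn0)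
      · rw [hp.factorization_pow, Finsupp.single_eq_same, Nat.div_self hpos]
  rw [Finset.sum_ite, Finset.sum_const_zero, add_zero, Finset.sum_const, hset,
    Finset.card_image_of_injective _ (Nat.pow_right_injective hp.two_le),
    Finset.card_range, nsmul_eq_mul, mul_one]
  push_cast
  ring

open ArithmeticFunction ArithmeticFunction.Moebius in
theorem stmt_18 (p : ℕ) (hp : p.Prime) (n : ℕ) (hn : 1 ≤ n) :
    -∑ k ∈ Finset.Icc 1 n, μ (p * k) * (n / k : ℕ) =
      1 + ⌊Real.log n / Real.log p⌋ := by
  have hrhs : ⌊Real.log n / Real.log p⌋ = (Nat.log p n : ℤ) := by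
    rw [Real.log_div_log, Real.floor_logb_natCast (Nat.cast_nonneg n), Int.log_natCast]
  rw [hrhs, swapLem (fun k => (μ (p * k) : ℤ)) n]
  rw [Finset.sum_congr rfl (fun m hm => innerLem p hp m
    (by simp only [Finset.mem_Icc] at hm; omega))]
  rw [Finset.sum_neg_distrib, neg_neg, countLem p hp n hn]
  ring
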